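/- arXiv:1404.2875 — 2 statements merged into one kernel-verified Lean document; each statement's English description precedes it below -/
import Mathlib

section
/- Let X be a compact metric space and let (μ_n) be a sequence of finite signed Borel measures on X converging weakly to a finite signed Borel measure μ. Then ‖μ‖_neg ≤ liminf_{n→∞} ‖μ_n‖_neg; that is, the negative-part mass is lower semicontinuous with respect to weak convergence. -/
open MeasureTheory Filter Topology
open scoped ENNReal

/-- The integral of `φ` against a finite signed measure `μ`, defined via the Jordan
decomposition: `∫ φ dμ = ∫ φ dμ⁺_J - ∫ φ dμ⁻_J`. -/
noncomputable def sintegral {X : Type*} [MeasurableSpace X] (μ : SignedMeasure X)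
    (φ : X → ℝ) : ℝ :=
  (∫ x, φ x ∂μ.toJordanDecomposition.posPart) - ∫ x, φ x ∂μ.toJordanDecomposition.negPart

/-- The negative-part mass `‖μ‖_neg` of a finite signed measure: the total mass of the
negative part of its Jordan decomposition (equivalently, the infimum of `ν⁻(X)` over all
decompositions `μ = ν⁺ - ν⁻` into finite positive measures). -/
noncomputable def negMass {X : Type*} [MeasurableSpace X] (μ : SignedMeasure X) : ℝ≥0∞ :=
  μ.toJordanDecomposition.negPart Set.univ

lemma aux_integrable {X : Type*} [MetricSpace X] [CompactSpace X] [MeasurableSpace X]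
    [BorelSpace X] (ν : Measure X) [IsFiniteMeasure ν] {φ : X → ℝ} (hφ : Continuous φ) :
    Integrable φ ν :=
  hφ.integrable_of_hasCompactSupport (HasCompactSupport.of_compactSpace φ)

/-- For `0 ≤ φ ≤ 1`, `-∫ φ dν ≤ ‖ν‖_neg`. -/
lemma aux_neg_le {X : Type*} [MetricSpace X] [CompactSpace X] [MeasurableSpace X]
    [BorelSpace X] (ν : SignedMeasure X) {φ : X → ℝ} (hφ : Continuous φ)
    (h0 : ∀ x, 0 ≤ φ x) (h1 : ∀ x, φ x ≤ 1) :
    ENNReal.ofReal (-sintegral ν φ) ≤ negMass ν := by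
  have hneg : (∫ x, φ x ∂ν.toJordanDecomposition.negPart)
      ≤ (ν.toJordanDecomposition.negPart Set.univ).toReal := by
    calc (∫ x, φ x ∂ν.toJordanDecomposition.negPart)
        ≤ ∫ _, (1 : ℝ) ∂ν.toJordanDecomposition.negPart :=
          integral_mono (aux_integrable _ hφ) (integrable_const 1) h1
      _ = (ν.toJordanDecomposition.negPart Set.univ).toReal := by simp; rfl
  have hpos : 0 ≤ ∫ x, φ x ∂ν.toJordanDecomposition.posPart := integral_nonneg h0
  have : -sintegral ν φ ≤ (ν.toJordanDecomposition.negPart Set.univ).toReal := by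
    unfold sintegral; linarith
  calc ENNReal.ofReal (-sintegral ν φ)
      ≤ ENNReal.ofReal (ν.toJordanDecomposition.negPart Set.univ).toReal :=
        ENNReal.ofReal_le_ofReal this
    _ = negMass ν := ENNReal.ofReal_toReal (measure_ne_top _ _)

/-- Lower semicontinuity of the negative-part mass under weak convergence of finite signed
Borel measures on a compact metric space. -/
theorem negMass_lsc_weak_convergence {X : Type*} [MetricSpace X] [CompactSpace X]
    [MeasurableSpace X] [BorelSpace X]
    (μ : SignedMeasure X) (μn : ℕ → SignedMeasure X)
    (h : ∀ φ : X → ℝ, Continuous φ →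
      Tendsto (fun n => sintegral (μn n) φ) atTop (𝓝 (sintegral μ φ))) :
    negMass μ ≤ liminf (fun n => negMass (μn n)) atTop := by
  set pos := μ.toJordanDecomposition.posPart with hposdef
  set neg := μ.toJordanDecomposition.negPart with hnegdef
  apply ENNReal.le_of_forall_pos_le_add
  intro ε hε _
  set ε' : ℝ≥0∞ := (ε : ℝ≥0∞) / 2 with hε'def
  have hε' : ε' ≠ 0 := by
    simp [hε'def, ENNReal.div_eq_zero_iff, (ENNReal.coe_pos.2 hε).ne']
  -- mutual singularity: a set S with pos S = 0 and neg Sᶜ = 0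
  obtain ⟨S, hSm, hSpos, hSneg⟩ := μ.toJordanDecomposition.mutuallySingular
  -- inner regularity for neg: compact K ⊆ S with neg S < neg K + ε'
  obtain ⟨K, hKS, hKcomp, hKlt⟩ :=
    hSm.exists_isCompact_lt_add (μ := neg) (measure_ne_top _ _) hε'
  -- outer regularity for pos: open U ⊇ K with pos U < ε'
  have hposK : pos K < ε' := by
    have : pos K ≤ pos S := measure_mono hKS
    rw [hSpos] at this
    exact lt_of_le_of_lt this (pos_iff_ne_zero.2 hε')
  obtain ⟨U, hKU, hUopen, hUlt⟩ := Set.exists_isOpen_lt_of_lt (μ := pos) K _ hposK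
  -- Urysohn function: 0 on Uᶜ, 1 on K, values in [0,1]
  obtain ⟨f, hf0, hf1, hf01⟩ := exists_continuous_zero_one_of_isClosed
    hUopen.isClosed_compl hKcomp.isClosed (disjoint_compl_left.mono_right hKU)
  have hfc : Continuous (f : X → ℝ) := f.continuous
  have hfnn : ∀ x, 0 ≤ f x := fun x => (hf01 x).1
  have hfle : ∀ x, f x ≤ 1 := fun x => (hf01 x).2
  -- real estimates
  have hnegK : (neg K).toReal ≤ ∫ x, f x ∂neg := by
    calc (neg K).toReal = ∫ x, Set.indicator K (fun _ => (1:ℝ)) x ∂neg := by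
          rw [integral_indicator_const _ hKcomp.measurableSet]; simp; rfl
      _ ≤ ∫ x, f x ∂neg := by
          refine integral_mono ?_ (aux_integrable _ hfc) ?_
          · exact (integrable_const 1).indicator hKcomp.measurableSet
          · intro x
            by_cases hx : x ∈ K
            · simp [Set.indicator_of_mem hx, hf1 hx]
            · simp [Set.indicator_of_notMem hx, hfnn x]
  have hposU : (∫ x, f x ∂pos) ≤ (pos U).toReal := by
    calc (∫ x, f x ∂pos) ≤ ∫ x, Set.indicator U (fun _ => (1:ℝ)) x ∂pos := by
          refine integral_mono (aux_integrable _ hfc) ?_ ?_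
          · exact (integrable_const 1).indicator hUopen.measurableSet
          · intro x
            by_cases hx : x ∈ U
            · simp [Set.indicator_of_mem hx, hfle x]
            · have : f x = 0 := hf0 hx
              simp [Set.indicator_of_notMem hx, this]
      _ = (pos U).toReal := by
          rw [integral_indicator_const _ hUopen.measurableSet]; simp; rfl
  have hkey : (neg K).toReal - (pos U).toReal ≤ -sintegral μ f := by
    have : sintegral μ f = (∫ x, f x ∂pos) - ∫ x, f x ∂neg := rfl
    rw [this]; linarith
  -- pass to ENNReal
  have hKenn : neg K ≤ ENNReal.ofReal (-sintegral μ f) + pos U := by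
    calc neg K = ENNReal.ofReal (neg K).toReal := (ENNReal.ofReal_toReal (measure_ne_top _ _)).symm
      _ ≤ ENNReal.ofReal ((-sintegral μ f) + (pos U).toReal) := by
          apply ENNReal.ofReal_le_ofReal; linarith
      _ ≤ ENNReal.ofReal (-sintegral μ f) + ENNReal.ofReal (pos U).toReal :=
          ENNReal.ofReal_add_le
      _ = ENNReal.ofReal (-sintegral μ f) + pos U := by
          rw [ENNReal.ofReal_toReal (measure_ne_top _ _)]
  -- liminf bound
  have hlim : ENNReal.ofReal (-sintegral μ f) ≤ liminf (fun n => negMass (μn n)) atTop := by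
    have htend : Tendsto (fun n => ENNReal.ofReal (-sintegral (μn n) f)) atTop
        (𝓝 (ENNReal.ofReal (-sintegral μ f))) :=
      (ENNReal.continuous_ofReal.tendsto _).comp ((h f hfc).neg)
    rw [← htend.liminf_eq]
    exact liminf_le_liminf (Eventually.of_forall fun n => aux_neg_le (μn n) hfc hfnn hfle)
  -- assemble
  have huniv : neg Set.univ ≤ neg S := by
    calc neg Set.univ = neg (S ∪ Sᶜ) := by rw [Set.union_compl_self]
      _ ≤ neg S + neg Sᶜ := measure_union_le _ _
      _ = neg S := by rw [hSneg, add_zero]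
  calc negMass μ = neg Set.univ := rfl
    _ ≤ neg S := huniv
    _ ≤ neg K + ε' := hKlt.le
    _ ≤ (ENNReal.ofReal (-sintegral μ f) + pos U) + ε' := add_le_add_left hKenn _
    _ ≤ (ENNReal.ofReal (-sintegral μ f) + ε') + ε' := by
        exact add_le_add_left (add_le_add_right hUlt.le _) _
    _ = ENNReal.ofReal (-sintegral μ f) + (ε' + ε') := by ring
    _ ≤ liminf (fun n => negMass (μn n)) atTop + ε := by
        rw [hε'def, ENNReal.add_halves]
        exact add_le_add_left hlim _
end

section
/- Let X be a compact metric space and μ a finite signed Borel measure on X. Then ‖μ‖_neg = sup { −∫_X φ dμ : φ : X → ℝ continuous, 0 ≤ φ ≤ 1 }. -/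
open MeasureTheory
open scoped ENNReal

/-- Duality formula for the negative-part mass:
`‖μ‖_neg = sup { -∫ φ dμ : φ continuous, 0 ≤ φ ≤ 1 }`. -/
theorem negMass_eq_sup_continuous {X : Type*} [MetricSpace X] [CompactSpace X]
    [MeasurableSpace X] [BorelSpace X] (μ : SignedMeasure X) :
    (negMass μ).toReal =
      sSup {r : ℝ | ∃ φ : X → ℝ, Continuous φ ∧ (∀ x, 0 ≤ φ x ∧ φ x ≤ 1) ∧
        r = -sintegral μ φ} := by
  set p := μ.toJordanDecomposition.posPart with hp
  set n := μ.toJordanDecomposition.negPart with hn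
  set S := {r : ℝ | ∃ φ : X → ℝ, Continuous φ ∧ (∀ x, 0 ≤ φ x ∧ φ x ≤ 1) ∧
        r = -sintegral μ φ} with hS
  have hpfin : IsFiniteMeasure p := inferInstance
  have hnfin : IsFiniteMeasure n := inferInstance
  -- integrability of continuous functions
  have hint : ∀ (ν : Measure X) [IsFiniteMeasure ν] {φ : X → ℝ}, Continuous φ →
      Integrable φ ν := by
    intro ν _ φ hφ
    exact hφ.integrable_of_hasCompactSupport
      (IsCompact.of_isClosed_subset isCompact_univ (isClosed_tsupport φ) (Set.subset_univ _))
  -- membership bound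
  have hbound : ∀ r ∈ S, r ≤ (n Set.univ).toReal := by
    rintro r ⟨φ, hφ, hφ01, rfl⟩
    have h1 : sintegral μ φ = (∫ x, φ x ∂p) - ∫ x, φ x ∂n := rfl
    have h2 : (0:ℝ) ≤ ∫ x, φ x ∂p :=
      integral_nonneg fun x => (hφ01 x).1
    have h3 : (∫ x, φ x ∂n) ≤ ∫ x, (1:ℝ) ∂n :=
      integral_mono (hint n hφ) (integrable_const 1) fun x => (hφ01 x).2
    rw [integral_const, smul_eq_mul, mul_one, measureReal_def] at h3
    rw [h1]
    linarith [h3, h2]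
  have hne : S.Nonempty := by
    refine ⟨-sintegral μ (fun _ => 0), fun _ => 0, continuous_const, fun x => ⟨le_rfl, zero_le_one⟩,
      rfl⟩
  have hbdd : BddAbove S := ⟨(n Set.univ).toReal, hbound⟩
  have hnegMass : negMass μ = n Set.univ := rfl
  rw [hnegMass]
  refine le_antisymm ?_ (csSup_le hne hbound)
  -- the hard direction: for every ε > 0, (n univ).toReal - ε ≤ sSup S
  refine le_of_forall_sub_le fun ε hε => ?_
  obtain ⟨A, hAm, hpA, hnAc⟩ := μ.toJordanDecomposition.mutuallySingular
  -- inner regularity for n: closed F ⊆ A with n A < n F + ε/2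
  obtain ⟨F, hFA, hFc, hFlt⟩ := hAm.exists_isClosed_lt_add (μ := n)
    (measure_ne_top n A) (by simp [ENNReal.ofReal_eq_zero]; linarith : ENNReal.ofReal (ε/2) ≠ 0)
  -- outer regularity for p: open U ⊇ F with p U < ε/2
  have hpF : p F < ENNReal.ofReal (ε/2) := by
    have : p F ≤ p A := measure_mono hFA
    rw [hpA] at this
    have h0 : p F = 0 := le_antisymm this zero_le
    rw [h0]
    simp [ENNReal.ofReal_pos]
    linarith
  obtain ⟨U, hFU, hUo, hpU⟩ := F.exists_isOpen_lt_of_lt _ hpF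
  -- Urysohn
  obtain ⟨f, hf0, hf1, hf01⟩ := exists_continuous_zero_one_of_isClosed
    (isClosed_compl_iff.2 hUo) hFc (disjoint_compl_left_iff.2 hFU)
  have hfc : Continuous f := f.continuous
  have hmem : -sintegral μ f ∈ S :=
    ⟨f, hfc, fun x => ⟨(hf01 x).1, (hf01 x).2⟩, rfl⟩
  have hintp := hint p hfc
  have hintn := hint n hfc
  -- lower bound on ∫ f dn
  have hn1 : (n F).toReal ≤ ∫ x, f x ∂n := by
    have h1 : (1:ℝ) * (n F).toReal ≤ ∫ x in F, f x ∂n := by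
      refine setIntegral_ge_of_const_le_real hFc.measurableSet (measure_ne_top n F)
        (fun x hx => by rw [hf1 hx]; rfl) hintn.integrableOn
    have h2 : ∫ x in F, f x ∂n ≤ ∫ x, f x ∂n :=
      setIntegral_le_integral hintn (Filter.Eventually.of_forall fun x => (hf01 x).1)
    linarith
  -- upper bound on ∫ f dp
  have hp1 : ∫ x, f x ∂p ≤ (p U).toReal := by
    have hsplit : (∫ x in U, f x ∂p) + ∫ x in Uᶜ, f x ∂p = ∫ x, f x ∂p :=
      integral_add_compl hUo.measurableSet hintp
    have hzero : ∫ x in Uᶜ, f x ∂p = 0 := by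
      rw [setIntegral_congr_fun hUo.measurableSet.compl (fun x hx => hf0 hx)]
      simp
    have hle : ∫ x in U, f x ∂p ≤ ∫ x in U, (1:ℝ) ∂p := by
      refine setIntegral_mono_on hintp.integrableOn
        (integrableOn_const (measure_ne_top p U)) hUo.measurableSet
        (fun x _ => (hf01 x).2)
    rw [setIntegral_const, smul_eq_mul, mul_one, measureReal_def] at hle
    linarith [hsplit, hzero, hle]
  -- combine
  have hkey : (n Set.univ).toReal - ε ≤ -sintegral μ f := by
    have hnA : n Set.univ = n A := by
      have h1 : n Set.univ ≤ n A + n Aᶜ := by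
        rw [← Set.union_compl_self A]
        exact measure_union_le _ _
      rw [hnAc, add_zero] at h1
      exact le_antisymm h1 (measure_mono (Set.subset_univ _))
    have hnF : (n A).toReal ≤ (n F).toReal + ε/2 := by
      have := hFlt.le
      calc (n A).toReal ≤ (n F + ENNReal.ofReal (ε/2)).toReal :=
            ENNReal.toReal_mono (by finiteness) this
        _ = (n F).toReal + ε/2 := by
            rw [ENNReal.toReal_add (measure_ne_top n F) ENNReal.ofReal_ne_top,
              ENNReal.toReal_ofReal (by linarith)]
    have hpU' : (p U).toReal ≤ ε/2 :=
      ENNReal.toReal_le_of_le_ofReal (by linarith) hpU.le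
    have : sintegral μ f = (∫ x, f x ∂p) - ∫ x, f x ∂n := rfl
    rw [this, hnA]
    linarith
  exact hkey.trans (le_csSup hbdd hmem)
end
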